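/- arXiv:1410.3325 — 2 statements merged into one kernel-verified Lean document; each statement's English description precedes it below -/
import Mathlib

section
/- Let {{−,−}} be a 2-fold bracket on V satisfying the skewsymmetry {{a,b}} = −({{b,a}})^σ. Set {a,b} := m{{a,b}} ∈ V, and extend {a,−} to V⊗V by {a, x⊗y} := {a,x}⊗y + x⊗{a,y}. Then for all a,b,c ∈ V the following identity holds in V⊗V: {a, {{b,c}}} − {{ {a,b}, c }} − {{ b, {a,c} }} = (m⊗1){{a,b,c}} − (1⊗m){{b,a,c}}, where {{a,b,c}} := {{a,{{b,c}}}}_L + ({{b,{{c,a}}}}_L)^σ + ({{c,{{a,b}}}}_L)^{σ²}, and m⊗1, 1⊗m : V^{⊗3} → V⊗V multiply the first two (respectively the last two) tensor factors. -/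
open TensorProduct LinearMap

section DPA

variable (𝔽 : Type) [Field 𝔽] (V : Type) [Ring V] [Algebra 𝔽 V]

/-- The swap `(u ⊗ v)^σ = v ⊗ u` on `V ⊗ V`. -/
noncomputable abbrev swap2 : V ⊗[𝔽] V ≃ₗ[𝔽] V ⊗[𝔽] V := TensorProduct.comm 𝔽 V V

/-- The cyclic permutation `(u ⊗ v ⊗ w)^σ = w ⊗ u ⊗ v` on `V ⊗ V ⊗ V = (V ⊗ V) ⊗ V`. -/
noncomputable def sigma3 : (V ⊗[𝔽] V) ⊗[𝔽] V ≃ₗ[𝔽] (V ⊗[𝔽] V) ⊗[𝔽] V :=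
  (TensorProduct.comm 𝔽 (V ⊗[𝔽] V) V).trans (TensorProduct.assoc 𝔽 V V V).symm

/-- Left multiplication `a · (u ⊗ v) = (a*u) ⊗ v` (outer bimodule structure). -/
noncomputable def lact2 (a : V) : V ⊗[𝔽] V →ₗ[𝔽] V ⊗[𝔽] V :=
  LinearMap.rTensor V (LinearMap.mulLeft 𝔽 a)

/-- Right multiplication `(u ⊗ v) · c = u ⊗ (v*c)` (outer bimodule structure). -/
noncomputable def ract2 (c : V) : V ⊗[𝔽] V →ₗ[𝔽] V ⊗[𝔽] V :=
  LinearMap.lTensor V (LinearMap.mulRight 𝔽 c)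

/-- `(u ⊗ v) ⋆₁ b = (u*b) ⊗ v`. -/
noncomputable def star1r (b : V) : V ⊗[𝔽] V →ₗ[𝔽] V ⊗[𝔽] V :=
  LinearMap.rTensor V (LinearMap.mulRight 𝔽 b)

/-- `a ⋆₁ (u ⊗ v) = u ⊗ (a*v)`. -/
noncomputable def star1l (a : V) : V ⊗[𝔽] V →ₗ[𝔽] V ⊗[𝔽] V :=
  LinearMap.lTensor V (LinearMap.mulLeft 𝔽 a)

/-- The `•`-product on `V ⊗ V`:  `(u ⊗ v) • (x ⊗ y) = (u*x) ⊗ (y*v)`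
(the multiplication of `V ⊗ Vᵒᵖ`). -/
noncomputable def bullet : V ⊗[𝔽] V →ₗ[𝔽] V ⊗[𝔽] V →ₗ[𝔽] V ⊗[𝔽] V :=
  TensorProduct.lift
    (((TensorProduct.mapBilinear (RingHom.id 𝔽) V V V V).comp (LinearMap.mul 𝔽 V)).compl₂
      ((LinearMap.mul 𝔽 V).flip))

/-- A `2`-fold bracket on `V`: an `𝔽`-bilinear map `V × V → V ⊗ V` satisfying the two
Leibniz rules `{{a,bc}} = {{a,b}}·c + b·{{a,c}}` and `{{ab,c}} = {{a,c}} ⋆₁ b + a ⋆₁ {{b,c}}`. -/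
def IsDoubleBracket (Br : V →ₗ[𝔽] V →ₗ[𝔽] V ⊗[𝔽] V) : Prop :=
  (∀ a b c : V, Br a (b * c) = ract2 𝔽 V c (Br a b) + lact2 𝔽 V b (Br a c)) ∧
  (∀ a b c : V, Br (a * b) c = star1r 𝔽 V b (Br a c) + star1l 𝔽 V a (Br b c))

variable {𝔽 V}

/-- `{{a, B}}_L` : apply the bracket to the first tensor factor. -/
noncomputable def brL (Br : V →ₗ[𝔽] V →ₗ[𝔽] V ⊗[𝔽] V) (a : V) :
    V ⊗[𝔽] V →ₗ[𝔽] (V ⊗[𝔽] V) ⊗[𝔽] V :=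
  LinearMap.rTensor V (Br a)

/-- `{{a, B}}_R` : apply the bracket to the second tensor factor. -/
noncomputable def brR (Br : V →ₗ[𝔽] V →ₗ[𝔽] V ⊗[𝔽] V) (a : V) :
    V ⊗[𝔽] V →ₗ[𝔽] (V ⊗[𝔽] V) ⊗[𝔽] V :=
  (TensorProduct.assoc 𝔽 V V V).symm.toLinearMap ∘ₗ LinearMap.lTensor V (Br a)

variable (𝔽 V)

/-- `ρ₂` : swap the last two tensor factors of `V ⊗ V ⊗ V`. -/
noncomputable def rho2 : (V ⊗[𝔽] V) ⊗[𝔽] V ≃ₗ[𝔽] (V ⊗[𝔽] V) ⊗[𝔽] V :=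
  (TensorProduct.assoc 𝔽 V V V).trans
    ((TensorProduct.congr (LinearEquiv.refl 𝔽 V) (TensorProduct.comm 𝔽 V V)).trans
      (TensorProduct.assoc 𝔽 V V V).symm)

variable {𝔽 V}

/-- Conjugated bullet action used to define the actions `•ᵢ` of `V ⊗ V` on `V ⊗ V ⊗ V`. -/
noncomputable def conjAct (β : V ⊗[𝔽] V →ₗ[𝔽] V ⊗[𝔽] V →ₗ[𝔽] V ⊗[𝔽] V)
    (ρ : (V ⊗[𝔽] V) ⊗[𝔽] V ≃ₗ[𝔽] (V ⊗[𝔽] V) ⊗[𝔽] V) :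
    V ⊗[𝔽] V →ₗ[𝔽] (V ⊗[𝔽] V) ⊗[𝔽] V →ₗ[𝔽] (V ⊗[𝔽] V) ⊗[𝔽] V :=
  (LinearMap.lcomp 𝔽 _ ρ.toLinearMap) ∘ₗ
    (LinearMap.llcomp 𝔽 ((V ⊗[𝔽] V) ⊗[𝔽] V) ((V ⊗[𝔽] V) ⊗[𝔽] V) ((V ⊗[𝔽] V) ⊗[𝔽] V)
      ρ.symm.toLinearMap) ∘ₗ
    (LinearMap.rTensorHom V) ∘ₗ β

variable (𝔽 V)

/-- The right action `X •₁ A`, i.e. `(x⊗y⊗z) •₁ (a⊗b) = x⊗(y*a)⊗(b*z)`;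
`bAct1R A X = X •₁ A`. -/
noncomputable def bAct1R : V ⊗[𝔽] V →ₗ[𝔽] (V ⊗[𝔽] V) ⊗[𝔽] V →ₗ[𝔽] (V ⊗[𝔽] V) ⊗[𝔽] V :=
  conjAct (bullet 𝔽 V).flip ((sigma3 𝔽 V).trans (sigma3 𝔽 V))

/-- The left action `A •₂ X`, i.e. `(a⊗b) •₂ (x⊗y⊗z) = (a*x)⊗y⊗(z*b)`. -/
noncomputable def bAct2L : V ⊗[𝔽] V →ₗ[𝔽] (V ⊗[𝔽] V) ⊗[𝔽] V →ₗ[𝔽] (V ⊗[𝔽] V) ⊗[𝔽] V :=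
  conjAct (bullet 𝔽 V) (rho2 𝔽 V)

/-- The right action `X •₃ A`, i.e. `(x⊗y⊗z) •₃ (a⊗b) = (x*a)⊗(b*y)⊗z`;
`bAct3R A X = X •₃ A`. -/
noncomputable def bAct3R : V ⊗[𝔽] V →ₗ[𝔽] (V ⊗[𝔽] V) ⊗[𝔽] V →ₗ[𝔽] (V ⊗[𝔽] V) ⊗[𝔽] V :=
  conjAct (bullet 𝔽 V).flip (LinearEquiv.refl 𝔽 ((V ⊗[𝔽] V) ⊗[𝔽] V))

/-- `a ⋆₁ (x⊗y⊗z) = x⊗(a*y)⊗z`. -/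
noncomputable def slot2L (a : V) : (V ⊗[𝔽] V) ⊗[𝔽] V →ₗ[𝔽] (V ⊗[𝔽] V) ⊗[𝔽] V :=
  LinearMap.rTensor V (LinearMap.lTensor V (LinearMap.mulLeft 𝔽 a))

/-- `(x⊗y⊗z) ⋆₁ b = x⊗(y*b)⊗z`. -/
noncomputable def slot2R (b : V) : (V ⊗[𝔽] V) ⊗[𝔽] V →ₗ[𝔽] (V ⊗[𝔽] V) ⊗[𝔽] V :=
  LinearMap.rTensor V (LinearMap.lTensor V (LinearMap.mulRight 𝔽 b))

/-- `a ⋆₂ (x⊗y⊗z) = x⊗y⊗(a*z)`. -/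
noncomputable def slot3L (a : V) : (V ⊗[𝔽] V) ⊗[𝔽] V →ₗ[𝔽] (V ⊗[𝔽] V) ⊗[𝔽] V :=
  LinearMap.lTensor (V ⊗[𝔽] V) (LinearMap.mulLeft 𝔽 a)

/-- `(x⊗y⊗z) ⋆₂ b = (x*b)⊗y⊗z`. -/
noncomputable def slot1R (b : V) : (V ⊗[𝔽] V) ⊗[𝔽] V →ₗ[𝔽] (V ⊗[𝔽] V) ⊗[𝔽] V :=
  LinearMap.rTensor V (LinearMap.rTensor V (LinearMap.mulRight 𝔽 b))

/-- outer left: `a · (x⊗y⊗z) = (a*x)⊗y⊗z`. -/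
noncomputable def slot1L (a : V) : (V ⊗[𝔽] V) ⊗[𝔽] V →ₗ[𝔽] (V ⊗[𝔽] V) ⊗[𝔽] V :=
  LinearMap.rTensor V (LinearMap.rTensor V (LinearMap.mulLeft 𝔽 a))

/-- outer right: `(x⊗y⊗z) · b = x⊗y⊗(z*b)`. -/
noncomputable def slot3R (b : V) : (V ⊗[𝔽] V) ⊗[𝔽] V →ₗ[𝔽] (V ⊗[𝔽] V) ⊗[𝔽] V :=
  LinearMap.lTensor (V ⊗[𝔽] V) (LinearMap.mulRight 𝔽 b)

variable {𝔽 V}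

/-- The triple bracket `{{a,b,c}}`. -/
noncomputable def triple (Br : V →ₗ[𝔽] V →ₗ[𝔽] V ⊗[𝔽] V) (a b c : V) :
    (V ⊗[𝔽] V) ⊗[𝔽] V :=
  brL Br a (Br b c) + sigma3 𝔽 V (brL Br b (Br c a)) +
    sigma3 𝔽 V (sigma3 𝔽 V (brL Br c (Br a b)))

variable (𝔽 V)

/-- Skewsymmetry of a 2-fold bracket. -/
def IsSkew (Br : V →ₗ[𝔽] V →ₗ[𝔽] V ⊗[𝔽] V) : Prop :=
  ∀ a b : V, Br a b = - swap2 𝔽 V (Br b a)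

/-- The span of commutators `[V,V]`. -/
def commSub : Submodule 𝔽 V := Submodule.span 𝔽 {x : V | ∃ a b : V, x = a * b - b * a}

variable {𝔽 V}

/-- The associated bracket `{a,b} = m {{a,b}}`. -/
noncomputable def sb (Br : V →ₗ[𝔽] V →ₗ[𝔽] V ⊗[𝔽] V) (a b : V) : V :=
  LinearMap.mul' 𝔽 V (Br a b)

/-- A 2-fold derivation: `D(ab) = (Da)·b + a·(Db)`. -/
def Is2Deriv (D : V →ₗ[𝔽] V ⊗[𝔽] V) : Prop :=
  ∀ a b : V, D (a * b) = ract2 𝔽 V b (D a) + lact2 𝔽 V a (D b)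

/-- `D` and `E` strongly commute: `D_L ∘ E = E_R ∘ D`. -/
def StronglyComm (D E : V →ₗ[𝔽] V ⊗[𝔽] V) : Prop :=
  ∀ f : V, LinearMap.rTensor V D (E f) =
    (TensorProduct.assoc 𝔽 V V V).symm (LinearMap.lTensor V E (D f))


/-- `{a,−}` extended to `V ⊗ V` by `{a, x⊗y} = {a,x}⊗y + x⊗{a,y}`. -/
noncomputable def extSb (𝔽 : Type) [Field 𝔽] (V : Type) [Ring V] [Algebra 𝔽 V]
    (Br : V →ₗ[𝔽] V →ₗ[𝔽] V ⊗[𝔽] V) (a : V) : V ⊗[𝔽] V →ₗ[𝔽] V ⊗[𝔽] V :=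
  LinearMap.rTensor V ((LinearMap.mul' 𝔽 V) ∘ₗ Br a) +
    LinearMap.lTensor V ((LinearMap.mul' 𝔽 V) ∘ₗ Br a)

/-- `m ⊗ 1 : V⊗V⊗V → V⊗V`, multiplying the first two factors. -/
noncomputable def mOne (𝔽 : Type) [Field 𝔽] (V : Type) [Ring V] [Algebra 𝔽 V] :
    (V ⊗[𝔽] V) ⊗[𝔽] V →ₗ[𝔽] V ⊗[𝔽] V :=
  LinearMap.rTensor V (LinearMap.mul' 𝔽 V)

/-- `1 ⊗ m : V⊗V⊗V → V⊗V`, multiplying the last two factors. -/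
noncomputable def oneM (𝔽 : Type) [Field 𝔽] (V : Type) [Ring V] [Algebra 𝔽 V] :
    (V ⊗[𝔽] V) ⊗[𝔽] V →ₗ[𝔽] V ⊗[𝔽] V :=
  (LinearMap.lTensor V (LinearMap.mul' 𝔽 V)) ∘ₗ (TensorProduct.assoc 𝔽 V V V).toLinearMap

section Aux

variable {𝔽 : Type} [Field 𝔽] {V : Type} [Ring V] [Algebra 𝔽 V]

lemma mOne_tmul' (u : V ⊗[𝔽] V) (y : V) :
    mOne 𝔽 V (u ⊗ₜ[𝔽] y) = (LinearMap.mul' 𝔽 V u) ⊗ₜ[𝔽] y := by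
  simp [mOne]

lemma oneM_tmul' (u : V ⊗[𝔽] V) (y : V) :
    oneM 𝔽 V (u ⊗ₜ[𝔽] y) = ract2 𝔽 V y u := by
  induction u using TensorProduct.induction_on with
  | zero => simp
  | tmul p q => simp [oneM, ract2]
  | add x z ih1 ih2 => simp only [add_tmul, map_add, ih1, ih2]

lemma mOne_sigma3_tmul (u : V ⊗[𝔽] V) (y : V) :
    mOne 𝔽 V (sigma3 𝔽 V (u ⊗ₜ[𝔽] y)) = lact2 𝔽 V y u := by
  induction u using TensorProduct.induction_on with
  | zero => simp
  | tmul p q => simp [mOne, sigma3, lact2]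
  | add x z ih1 ih2 => simp only [add_tmul, map_add, ih1, ih2]

lemma oneM_sigma3_tmul (u : V ⊗[𝔽] V) (y : V) :
    oneM 𝔽 V (sigma3 𝔽 V (u ⊗ₜ[𝔽] y)) = y ⊗ₜ[𝔽] (LinearMap.mul' 𝔽 V u) := by
  induction u using TensorProduct.induction_on with
  | zero => simp
  | tmul p q => simp [oneM, sigma3]
  | add x z ih1 ih2 => simp only [add_tmul, map_add, ih1, ih2, tmul_add]

lemma mOne_sigma3_sigma3_tmul (u : V ⊗[𝔽] V) (y : V) :
    mOne 𝔽 V (sigma3 𝔽 V (sigma3 𝔽 V (u ⊗ₜ[𝔽] y))) =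
      swap2 𝔽 V (ract2 𝔽 V y u) := by
  induction u using TensorProduct.induction_on with
  | zero => simp
  | tmul p q => simp [mOne, sigma3, ract2]
  | add x z ih1 ih2 => simp only [add_tmul, map_add, ih1, ih2]

lemma oneM_sigma3_sigma3_tmul (u : V ⊗[𝔽] V) (y : V) :
    oneM 𝔽 V (sigma3 𝔽 V (sigma3 𝔽 V (u ⊗ₜ[𝔽] y))) =
      star1l 𝔽 V y (swap2 𝔽 V u) := by
  induction u using TensorProduct.induction_on with
  | zero => simp
  | tmul p q => simp [oneM, sigma3, star1l]
  | add x z ih1 ih2 => simp only [add_tmul, map_add, ih1, ih2]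

lemma swap2_swap2 (w : V ⊗[𝔽] V) : swap2 𝔽 V (swap2 𝔽 V w) = w := by
  induction w using TensorProduct.induction_on with
  | zero => simp
  | tmul p q => simp
  | add x z ih1 ih2 => simp only [map_add, ih1, ih2]

lemma swap2_ract2_swap2 (y : V) (w : V ⊗[𝔽] V) :
    swap2 𝔽 V (ract2 𝔽 V y (swap2 𝔽 V w)) = star1r 𝔽 V y w := by
  induction w using TensorProduct.induction_on with
  | zero => simp
  | tmul p q => simp [ract2, star1r]
  | add x z ih1 ih2 => simp only [map_add, ih1, ih2]

lemma extSb_eq (Br : V →ₗ[𝔽] V →ₗ[𝔽] V ⊗[𝔽] V) (a : V) (X : V ⊗[𝔽] V) :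
    extSb 𝔽 V Br a X =
      mOne 𝔽 V (brL Br a X) +
        oneM 𝔽 V (sigma3 𝔽 V (brL Br a (swap2 𝔽 V X))) := by
  induction X using TensorProduct.induction_on with
  | zero => simp
  | tmul x y =>
      simp only [extSb, brL, LinearMap.add_apply, rTensor_tmul, lTensor_tmul,
        TensorProduct.comm_tmul, coe_comp, Function.comp_apply,
        mOne_tmul', oneM_sigma3_tmul]
  | add x z ih1 ih2 => simp only [map_add, ih1, ih2]; abel

lemma brMul_right (Br : V →ₗ[𝔽] V →ₗ[𝔽] V ⊗[𝔽] V)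
    (hBr : IsDoubleBracket 𝔽 V Br) (b : V) (X : V ⊗[𝔽] V) :
    Br b (LinearMap.mul' 𝔽 V X) =
      mOne 𝔽 V (sigma3 𝔽 V (brL Br b (swap2 𝔽 V X))) +
        oneM 𝔽 V (brL Br b X) := by
  induction X using TensorProduct.induction_on with
  | zero => simp
  | tmul x y =>
      simp only [brL, TensorProduct.comm_tmul, rTensor_tmul, mul'_apply,
        mOne_sigma3_tmul, oneM_tmul']
      rw [hBr.1 b x y]
      abel
  | add x z ih1 ih2 => simp only [map_add, LinearMap.add_apply, ih1, ih2]; abel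

lemma brMul_left (Br : V →ₗ[𝔽] V →ₗ[𝔽] V ⊗[𝔽] V)
    (hBr : IsDoubleBracket 𝔽 V Br) (hskew : IsSkew 𝔽 V Br) (c : V) (X : V ⊗[𝔽] V) :
    Br (LinearMap.mul' 𝔽 V X) c =
      - mOne 𝔽 V (sigma3 𝔽 V (sigma3 𝔽 V (brL Br c X))) -
        oneM 𝔽 V (sigma3 𝔽 V (sigma3 𝔽 V (brL Br c (swap2 𝔽 V X)))) := by
  induction X using TensorProduct.induction_on with
  | zero => simp
  | tmul x y =>
      simp only [brL, TensorProduct.comm_tmul, rTensor_tmul, mul'_apply,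
        mOne_sigma3_sigma3_tmul, oneM_sigma3_sigma3_tmul]
      rw [hBr.2 x y c, hskew c x, hskew c y]
      simp only [map_neg, swap2_ract2_swap2, swap2_swap2]
      abel
  | add x z ih1 ih2 =>
      simp only [map_add, LinearMap.add_apply, ih1, ih2]; abel

end Aux

/-- for a skewsymmetric 2-fold bracket,
`{a,{{b,c}}} − {{ {a,b}, c }} − {{ b, {a,c} }} = (m⊗1){{a,b,c}} − (1⊗m){{b,a,c}}`. -/
theorem statement_6 (𝔽 : Type) [Field 𝔽] [CharZero 𝔽] (V : Type) [Ring V] [Algebra 𝔽 V]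
    (Br : V →ₗ[𝔽] V →ₗ[𝔽] V ⊗[𝔽] V) (hBr : IsDoubleBracket 𝔽 V Br)
    (hskew : IsSkew 𝔽 V Br) (a b c : V) :
    extSb 𝔽 V Br a (Br b c) - Br (sb Br a b) c - Br b (sb Br a c) =
      mOne 𝔽 V (triple Br a b c) - oneM 𝔽 V (triple Br b a c) := by
  show extSb 𝔽 V Br a (Br b c) - Br (LinearMap.mul' 𝔽 V (Br a b)) c -
      Br b (LinearMap.mul' 𝔽 V (Br a c)) = _
  rw [extSb_eq Br a (Br b c), brMul_left Br hBr hskew c (Br a b),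
    brMul_right Br hBr b (Br a c)]
  simp only [triple, map_add]
  rw [hskew c a, hskew c b, hskew b a]
  simp only [map_neg]
  abel
end DPA
end

section
/- Let V be a unital associative 𝔽-algebra with pairwise strongly commuting 2-fold derivations D₁,…,D_ℓ (i.e., (D_i)_L ∘ D_j = (D_j)_R ∘ D_i for all i,j). For P = (P₁,…,P_ℓ) ∈ V^ℓ define X_P : V → V by X_P(f) := Σ_{i=1}^{ℓ} (D_i f)′ P_i (D_i f)″ (Sweedler notation for D_i f ∈ V⊗V). Then each X_P is a derivation of V, and for all P, Q ∈ V^ℓ: X_P ∘ X_Q − X_Q ∘ X_P = X_{[P,Q]}, where [P,Q]_i := X_P(Q_i) − X_Q(P_i). -/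
open TensorProduct LinearMap

section DPA

variable (𝔽 : Type) [Field 𝔽] (V : Type) [Ring V] [Algebra 𝔽 V]

variable {𝔽 V}

variable (𝔽 V)

variable {𝔽 V}

variable (𝔽 V)

variable {𝔽 V}

variable (𝔽 V)

variable {𝔽 V}

/-- `midMul p (u ⊗ v) = u * p * v`. -/
noncomputable def midMul (𝔽 : Type) [Field 𝔽] (V : Type) [Ring V] [Algebra 𝔽 V]
    (p : V) : V ⊗[𝔽] V →ₗ[𝔽] V :=
  (LinearMap.mul' 𝔽 V) ∘ₗ LinearMap.rTensor V (LinearMap.mulRight 𝔽 p)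

/-- The evolutionary vector field `X_P(f) = Σ_i (D_i f)′ P_i (D_i f)″`. -/
noncomputable def XPvf (𝔽 : Type) [Field 𝔽] (V : Type) [Ring V] [Algebra 𝔽 V]
    {ℓ : ℕ} (D : Fin ℓ → (V →ₗ[𝔽] V ⊗[𝔽] V)) (P : Fin ℓ → V) : V →ₗ[𝔽] V :=
  ∑ i : Fin ℓ, (midMul 𝔽 V (P i)) ∘ₗ (D i)

section Aux

variable (𝔽 : Type) [Field 𝔽] (V : Type) [Ring V] [Algebra 𝔽 V]

/-- `m3 p q (x⊗y⊗z) = x*p*y*q*z`. -/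
noncomputable def m3 (p q : V) : (V ⊗[𝔽] V) ⊗[𝔽] V →ₗ[𝔽] V :=
  midMul 𝔽 V q ∘ₗ LinearMap.rTensor V (midMul 𝔽 V p)

variable {𝔽 V}

lemma midMul_tmul (p u v : V) : midMul 𝔽 V p (u ⊗ₜ v) = u * p * v := by
  simp [midMul]

lemma midMul_ract2 (p c : V) (w : V ⊗[𝔽] V) :
    midMul 𝔽 V p (ract2 𝔽 V c w) = midMul 𝔽 V p w * c := by
  induction w using TensorProduct.induction_on with
  | zero => simp
  | tmul u v => simp [midMul_tmul, ract2, mul_assoc]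
  | add x y hx hy => simp only [map_add, hx, hy, add_mul]

lemma midMul_lact2 (p a : V) (w : V ⊗[𝔽] V) :
    midMul 𝔽 V p (lact2 𝔽 V a w) = a * midMul 𝔽 V p w := by
  induction w using TensorProduct.induction_on with
  | zero => simp
  | tmul u v => simp [midMul_tmul, lact2, mul_assoc]
  | add x y hx hy => simp only [map_add, hx, hy, mul_add]

lemma midMul_add_fst (p q : V) (w : V ⊗[𝔽] V) :
    midMul 𝔽 V (p + q) w = midMul 𝔽 V p w + midMul 𝔽 V q w := by
  induction w using TensorProduct.induction_on with
  | zero => simp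
  | tmul u v => simp [midMul_tmul, mul_add, add_mul]
  | add x y hx hy => simp only [map_add, hx, hy]; abel

lemma midMul_sub_fst (p q : V) (w : V ⊗[𝔽] V) :
    midMul 𝔽 V (p - q) w = midMul 𝔽 V p w - midMul 𝔽 V q w := by
  induction w using TensorProduct.induction_on with
  | zero => simp
  | tmul u v => simp [midMul_tmul, mul_sub, sub_mul]
  | add x y hx hy => simp only [map_add, hx, hy]; abel

lemma midMul_sum_fst {ι : Type*} (s : Finset ι) (c : ι → V) (w : V ⊗[𝔽] V) :
    midMul 𝔽 V (∑ j ∈ s, c j) w = ∑ j ∈ s, midMul 𝔽 V (c j) w := by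
  classical
  induction s using Finset.induction_on with
  | empty =>
      simp only [Finset.sum_empty]
      induction w using TensorProduct.induction_on with
      | zero => simp
      | tmul u v => simp [midMul_tmul]
      | add x y hx hy => simp only [map_add, hx, hy, add_zero]
  | insert _ _ hnot ih =>
      rw [Finset.sum_insert hnot, Finset.sum_insert hnot, midMul_add_fst, ih]

lemma m3_tmul (p q : V) (W : V ⊗[𝔽] V) (v : V) :
    m3 𝔽 V p q (W ⊗ₜ v) = midMul 𝔽 V p W * q * v := by
  simp [m3, midMul_tmul]

lemma m3_assoc_symm (q p u : V) (w : V ⊗[𝔽] V) :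
    m3 𝔽 V q p ((TensorProduct.assoc 𝔽 V V V).symm (u ⊗ₜ w)) =
      u * q * midMul 𝔽 V p w := by
  induction w using TensorProduct.induction_on with
  | zero => rw [TensorProduct.tmul_zero, LinearEquiv.map_zero, map_zero, map_zero, mul_zero]
  | tmul x y => simp [m3_tmul, midMul_tmul, mul_assoc]
  | add x y hx hy =>
      rw [TensorProduct.tmul_add, map_add, map_add, hx, hy, map_add, mul_add]

/-- The key expansion of `p ⋆ E(u q v)` over a 2-tensor `w`. -/
lemma key_expand (E : V →ₗ[𝔽] V ⊗[𝔽] V) (hE : Is2Deriv E) (p q : V) (w : V ⊗[𝔽] V) :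
    midMul 𝔽 V p (E (midMul 𝔽 V q w)) =
      m3 𝔽 V p q (LinearMap.rTensor V E w) +
      midMul 𝔽 V (midMul 𝔽 V p (E q)) w +
      m3 𝔽 V q p ((TensorProduct.assoc 𝔽 V V V).symm (LinearMap.lTensor V E w)) := by
  induction w using TensorProduct.induction_on with
  | zero =>
      rw [map_zero, map_zero, map_zero, map_zero, map_zero, map_zero, map_zero,
        LinearEquiv.map_zero, map_zero, add_zero, add_zero]
  | tmul u v =>
      rw [midMul_tmul, hE (u * q) v, hE u q]
      simp only [map_add, midMul_ract2, midMul_lact2, LinearMap.rTensor_tmul,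
        LinearMap.lTensor_tmul, m3_tmul, m3_assoc_symm, midMul_tmul]
  | add x y hx hy =>
      simp only [map_add, midMul_add_fst, hx, hy]
      abel

end Aux

/-- with strongly commuting 2-fold derivations, each `X_P` is a derivation
and `[X_P, X_Q] = X_{[P,Q]}` where `[P,Q]_i = X_P(Q_i) − X_Q(P_i)`. -/
theorem statement_13 (𝔽 : Type) [Field 𝔽] [CharZero 𝔽] (V : Type) [Ring V] [Algebra 𝔽 V]
    {ℓ : ℕ} (D : Fin ℓ → (V →ₗ[𝔽] V ⊗[𝔽] V)) (hD : ∀ i, Is2Deriv (D i))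
    (hcomm : ∀ i j, StronglyComm (D i) (D j)) :
    (∀ (P : Fin ℓ → V) (a b : V),
      XPvf 𝔽 V D P (a * b) = XPvf 𝔽 V D P a * b + a * XPvf 𝔽 V D P b) ∧
    (∀ P Q : Fin ℓ → V,
      XPvf 𝔽 V D P ∘ₗ XPvf 𝔽 V D Q - XPvf 𝔽 V D Q ∘ₗ XPvf 𝔽 V D P =
        XPvf 𝔽 V D (fun i => XPvf 𝔽 V D P (Q i) - XPvf 𝔽 V D Q (P i))) := by
  constructor
  · intro P a b
    simp only [XPvf, LinearMap.sum_apply, LinearMap.comp_apply]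
    rw [Finset.sum_mul, Finset.mul_sum, ← Finset.sum_add_distrib]
    refine Finset.sum_congr rfl fun i _ => ?_
    rw [hD i a b, map_add, midMul_ract2, midMul_lact2]
  · intro P Q
    ext f
    have expand : ∀ P Q : Fin ℓ → V,
        XPvf 𝔽 V D P (XPvf 𝔽 V D Q f) =
          (∑ j, ∑ i, m3 𝔽 V (P j) (Q i) (LinearMap.rTensor V (D j) ((D i) f)))
          + (∑ i, midMul 𝔽 V (XPvf 𝔽 V D P (Q i)) ((D i) f))
          + (∑ j, ∑ i, m3 𝔽 V (Q j) (P i) (LinearMap.rTensor V (D j) ((D i) f))) := by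
      intro P Q
      have step : ∀ j i : Fin ℓ,
          midMul 𝔽 V (P j) ((D j) (midMul 𝔽 V (Q i) ((D i) f))) =
            m3 𝔽 V (P j) (Q i) (LinearMap.rTensor V (D j) ((D i) f)) +
            midMul 𝔽 V (midMul 𝔽 V (P j) ((D j) (Q i))) ((D i) f) +
            m3 𝔽 V (Q i) (P j) (LinearMap.rTensor V (D i) ((D j) f)) := by
        intro j i
        rw [key_expand (D j) (hD j), ← hcomm i j f]
      simp only [XPvf, LinearMap.sum_apply, LinearMap.comp_apply, map_sum]
      simp only [step, Finset.sum_add_distrib]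
      congr 1
      congr 1
      · exact Finset.sum_comm
      · exact Finset.sum_congr rfl fun i _ => (midMul_sum_fst Finset.univ _ _).symm
    have hR : XPvf 𝔽 V D (fun i => XPvf 𝔽 V D P (Q i) - XPvf 𝔽 V D Q (P i)) f
        = (∑ i, midMul 𝔽 V (XPvf 𝔽 V D P (Q i)) ((D i) f))
          - ∑ i, midMul 𝔽 V (XPvf 𝔽 V D Q (P i)) ((D i) f) := by
      rw [show XPvf 𝔽 V D (fun i => XPvf 𝔽 V D P (Q i) - XPvf 𝔽 V D Q (P i)) =
          ∑ i : Fin ℓ, (midMul 𝔽 V (XPvf 𝔽 V D P (Q i) - XPvf 𝔽 V D Q (P i))) ∘ₗ (D i)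
          from rfl]
      simp only [LinearMap.sum_apply, LinearMap.comp_apply, midMul_sub_fst,
        Finset.sum_sub_distrib]
    simp only [LinearMap.sub_apply, LinearMap.comp_apply]
    rw [expand P Q, expand Q P, hR]
    abel
end DPA
end
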